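/- Let ν(j) denote the least N such that every regressive coloring of the 2-element subsets of {1,2,...,N} admits a min-homogeneous subset of size j. Then for every integer k > 2, ν(4k² + k + 1) > f_k(4k²) − 1. -/

import Mathlib

/-- `f i` for `i ≥ 1`: `f 1 n = n + 1`, `f (i+1) n = (f i)^[⌊√n/2⌋] n`. -/
def f : ℕ → ℕ → ℕ
  | 0, n => n
  | 1, n => n + 1
  | i + 2, n => (f (i + 1))^[Nat.sqrt n / 2] n

/-- `ν j` is the least `N` such that every regressive coloring of pairs from
`{1,…,N}` has a min-homogeneous subset of size `j`. -/
noncomputable def nu (j : ℕ) : ℕ :=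
  sInf {N : ℕ | ∀ c : ℕ → ℕ → ℕ,
    (∀ m n, m ∈ Finset.Icc 1 N → n ∈ Finset.Icc 1 N → m < n → c m n < m) →
    ∃ B : Finset ℕ, B ⊆ Finset.Icc 1 N ∧ B.card = j ∧
      ∀ m n n', m ∈ B → n ∈ B → n' ∈ B → m < n → m < n' → c m n = c m n'}


namespace KS

lemma iterate_ge {g : ℕ → ℕ} (hg : ∀ x, x ≤ g x) : ∀ (l x : ℕ), x ≤ g^[l] x
  | 0, _ => le_rfl
  | l + 1, x => by
      rw [Function.iterate_succ_apply]
      exact (hg x).trans (iterate_ge hg l (g x))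

lemma iterate_count_le {g : ℕ → ℕ} (hg : ∀ x, x ≤ g x) {a b : ℕ} (h : a ≤ b) (x : ℕ) :
    g^[a] x ≤ g^[b] x := by
  obtain ⟨d, rfl⟩ := Nat.exists_eq_add_of_le h
  rw [Nat.add_comm, Function.iterate_add_apply]
  exact iterate_ge hg d _

lemma le_f : ∀ (i n : ℕ), n ≤ f i n
  | 0, _ => le_rfl
  | 1, n => Nat.le_succ n
  | i + 2, n => iterate_ge (le_f (i + 1)) _ n

lemma f_mono : ∀ i : ℕ, Monotone (f i)
  | 0 => monotone_id
  | 1 => fun _ _ h => Nat.succ_le_succ h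
  | i + 2 => fun a b h => by
      show (f (i+1))^[Nat.sqrt a / 2] a ≤ (f (i+1))^[Nat.sqrt b / 2] b
      calc (f (i+1))^[Nat.sqrt a / 2] a ≤ (f (i+1))^[Nat.sqrt a / 2] b :=
            ((f_mono (i+1)).iterate _) h
        _ ≤ (f (i+1))^[Nat.sqrt b / 2] b :=
            iterate_count_le (le_f (i+1)) (Nat.div_le_div_right (Nat.sqrt_le_sqrt h)) b

lemma f_succ_eq {i : ℕ} (hi : 1 ≤ i) (n : ℕ) : f (i + 1) n = (f i)^[Nat.sqrt n / 2] n := by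
  obtain ⟨j, rfl⟩ : ∃ j, i = j + 1 := ⟨i - 1, (Nat.succ_pred_eq_of_pos hi).symm⟩
  rfl

lemma sqrt_div_two_pos {n : ℕ} (hn : 4 ≤ n) : 1 ≤ Nat.sqrt n / 2 := by
  have h2 : 2 ≤ Nat.sqrt n := Nat.le_sqrt.2 (by omega)
  omega

lemma lt_f : ∀ i : ℕ, 1 ≤ i → ∀ n : ℕ, 4 ≤ n → n < f i n
  | 0, h, _, _ => absurd h (by omega)
  | 1, _, n, _ => Nat.lt_succ_self n
  | i + 2, _, n, hn => by
      show n < (f (i+1))^[Nat.sqrt n / 2] n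
      calc n < f (i+1) n := lt_f (i+1) (Nat.le_add_left _ _) n hn
        _ = (f (i+1))^[1] n := rfl
        _ ≤ (f (i+1))^[Nat.sqrt n / 2] n :=
            iterate_count_le (le_f (i+1)) (sqrt_div_two_pos hn) n

lemma f_le_f_succ {i : ℕ} (hi : 1 ≤ i) {n : ℕ} (hn : 4 ≤ n) : f i n ≤ f (i + 1) n := by
  rw [f_succ_eq hi]
  calc f i n = (f i)^[1] n := rfl
    _ ≤ (f i)^[Nat.sqrt n / 2] n := iterate_count_le (le_f i) (sqrt_div_two_pos hn) n

lemma f_mono_idx {i j n : ℕ} (hi : 1 ≤ i) (hij : i ≤ j) (hn : 4 ≤ n) : f i n ≤ f j n := by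
  induction j, hij using Nat.le_induction with
  | base => exact le_rfl
  | succ j hj ih => exact ih.trans (f_le_f_succ (hi.trans hj) hn)

end KS

namespace KS

def dd (k m n : ℕ) : ℕ := Nat.findGreatest (fun i => f i m ≤ n) k

def ll (k m n : ℕ) : ℕ := Nat.findGreatest (fun l => (f (dd k m n))^[l] m ≤ n) n

def col (k m n : ℕ) : ℕ := if m < 4 * k ^ 2 then 0 else ll k m n * k + dd k m n

lemma dd_pos {k m n : ℕ} (hk : 1 ≤ k) (hmn : m < n) : 1 ≤ dd k m n :=
  Nat.le_findGreatest hk (show f 1 m ≤ n from hmn)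

lemma dd_le (k m n : ℕ) : dd k m n ≤ k := Nat.findGreatest_le k

lemma dd_spec {k m n : ℕ} (hk : 1 ≤ k) (hmn : m < n) : f (dd k m n) m ≤ n :=
  Nat.findGreatest_spec (P := fun i => f i m ≤ n) hk (show f 1 m ≤ n from hmn)

lemma dd_lt {k m n : ℕ} (hk : 2 < k) (hm : 4 * k ^ 2 ≤ m) (hmn : m < n)
    (hn : n ≤ f k (4 * k ^ 2) - 1) : dd k m n < k := by
  rcases Nat.lt_or_ge (dd k m n) k with h | h
  · exact h
  · exfalso
    have hdk : dd k m n = k := le_antisymm (dd_le k m n) h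
    have h1 : f k m ≤ n := by
      have := dd_spec (k := k) (m := m) (n := n) (by omega) hmn
      rwa [hdk] at this
    have h2 : f k (4 * k ^ 2) ≤ f k m := f_mono k hm
    have h3 : 4 * k ^ 2 ≤ f k (4 * k ^ 2) := le_f k _
    have h4 : 1 ≤ 4 * k ^ 2 := by nlinarith
    omega

lemma dd_max {k m n i : ℕ} (hdi : dd k m n < i) (hik : i ≤ k) : ¬ f i m ≤ n :=
  Nat.findGreatest_is_greatest (P := fun j => f j m ≤ n) hdi hik

lemma four_le_m {k m : ℕ} (hk : 2 < k) (hm : 4 * k ^ 2 ≤ m) : 4 ≤ m := by nlinarith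

lemma k_le_sqrt {k m : ℕ} (hk : 2 < k) (hm : 4 * k ^ 2 ≤ m) : k ≤ Nat.sqrt m / 2 := by
  have h : 2 * k ≤ Nat.sqrt m := Nat.le_sqrt.2 (by nlinarith)
  omega

lemma ll_pos {k m n : ℕ} (hk : 1 ≤ k) (hm1 : 1 ≤ m) (hmn : m < n) : 1 ≤ ll k m n := by
  refine Nat.le_findGreatest (by omega) ?_
  show (f (dd k m n))^[1] m ≤ n
  simpa using dd_spec hk hmn

lemma ll_spec {k m n : ℕ} (hk : 1 ≤ k) (hm1 : 1 ≤ m) (hmn : m < n) :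
    (f (dd k m n))^[ll k m n] m ≤ n := by
  refine Nat.findGreatest_spec (P := fun l => (f (dd k m n))^[l] m ≤ n) (m := 1) (by omega) ?_
  show (f (dd k m n))^[1] m ≤ n
  simpa using dd_spec hk hmn

lemma ll_lt {k m n : ℕ} (hk : 2 < k) (hm : 4 * k ^ 2 ≤ m) (hmn : m < n)
    (hn : n ≤ f k (4 * k ^ 2) - 1) : ll k m n < Nat.sqrt m / 2 := by
  by_contra h
  push_neg at h
  have h1 : (f (dd k m n))^[Nat.sqrt m / 2] m ≤ (f (dd k m n))^[ll k m n] m :=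
    iterate_count_le (le_f _) h m
  have h2 : f (dd k m n + 1) m = (f (dd k m n))^[Nat.sqrt m / 2] m :=
    f_succ_eq (dd_pos (by omega) hmn) m
  have h3 : ¬ f (dd k m n + 1) m ≤ n :=
    dd_max (Nat.lt_succ_self _) (dd_lt hk hm hmn hn)
  exact h3 (h2 ▸ (h1.trans (ll_spec (by omega) (by nlinarith) hmn)))

lemma ll_succ_gt {k m n : ℕ} (hk : 2 < k) (hm : 4 * k ^ 2 ≤ m) (hmn : m < n)
    (hn : n ≤ f k (4 * k ^ 2) - 1) : n < (f (dd k m n))^[ll k m n + 1] m := by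
  by_contra h
  push_neg at h
  have hlt : ll k m n < ll k m n + 1 := Nat.lt_succ_self _
  have hle : ll k m n + 1 ≤ n := by
    have h1 := ll_lt hk hm hmn hn
    have h2 : Nat.sqrt m ≤ m := Nat.sqrt_le_self m
    omega
  exact Nat.findGreatest_is_greatest (P := fun l => (f (dd k m n))^[l] m ≤ n) hlt hle h

lemma col_lt {k m n : ℕ} (hk : 2 < k) (hm1 : 1 ≤ m) (hmn : m < n)
    (hn : n ≤ f k (4 * k ^ 2) - 1) : col k m n < m := by
  unfold col
  split_ifs with h
  · omega
  · push_neg at h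
    have hll := ll_lt hk h hmn hn
    have hdd := dd_lt hk h hmn hn
    have hks := k_le_sqrt hk h
    have hq : Nat.sqrt m / 2 * (Nat.sqrt m / 2) ≤ m := by
      calc Nat.sqrt m / 2 * (Nat.sqrt m / 2) ≤ Nat.sqrt m * Nat.sqrt m :=
        Nat.mul_le_mul (Nat.div_le_self _ _) (Nat.div_le_self _ _)
      _ ≤ m := Nat.sqrt_le m
    calc ll k m n * k + dd k m n < ll k m n * k + k := by omega
      _ = (ll k m n + 1) * k := by ring
      _ ≤ (Nat.sqrt m / 2) * (Nat.sqrt m / 2) := Nat.mul_le_mul (by omega) hks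
      _ ≤ m := hq
    -- need strict <: handled? (above gives < m via first strict step then ≤)

lemma col_decode_dd {k m n n' : ℕ} (hm : ¬ m < 4 * k ^ 2) (hdd : dd k m n < k) (hdd' : dd k m n' < k)
    (h : col k m n = col k m n') : dd k m n = dd k m n' ∧ ll k m n = ll k m n' := by
  unfold col at h
  rw [if_neg hm, if_neg hm] at h
  constructor
  · have h1 : (ll k m n * k + dd k m n) % k = dd k m n := by
      rw [Nat.add_comm, Nat.add_mul_mod_self_right, Nat.mod_eq_of_lt hdd]
    have h2 : (ll k m n' * k + dd k m n') % k = dd k m n' := by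
      rw [Nat.add_comm, Nat.add_mul_mod_self_right, Nat.mod_eq_of_lt hdd']
    rw [← h1, ← h2, h]
  · have h1 : (ll k m n * k + dd k m n) / k = ll k m n := by
      rw [Nat.add_comm, Nat.add_mul_div_right _ _ (by omega : 0 < k), Nat.div_eq_of_lt hdd]
      omega
    have h2 : (ll k m n' * k + dd k m n') / k = ll k m n' := by
      rw [Nat.add_comm, Nat.add_mul_div_right _ _ (by omega : 0 < k), Nat.div_eq_of_lt hdd']
      omega
    rw [← h1, ← h2, h]

end KS

namespace KS

lemma card_bound {k : ℕ} (hk : 2 < k) (B : Finset ℕ)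
    (hB : ∀ x ∈ B, 1 ≤ x ∧ x ≤ f k (4 * k ^ 2) - 1)
    (hmh : ∀ m n n', m ∈ B → n ∈ B → n' ∈ B → m < n → m < n' →
      col k m n = col k m n') :
    B.card ≤ 4 * k ^ 2 + k := by
  classical
  set P : ℕ → Prop := fun x => x < 4 * k ^ 2 with hP
  have hsplit : B.card = (B.filter P).card + (B.filter (fun x => ¬ P x)).card :=
    (Finset.card_filter_add_card_filter_not (p := P)).symm
  have h1 : (B.filter P).card ≤ 4 * k ^ 2 - 1 := by
    have hsub : B.filter P ⊆ Finset.Icc 1 (4 * k ^ 2 - 1) := by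
      intro x hx
      rw [Finset.mem_filter] at hx
      have := hB x hx.1
      have hxP : x < 4 * k ^ 2 := hx.2
      rw [Finset.mem_Icc]
      omega
    calc (B.filter P).card ≤ (Finset.Icc 1 (4 * k ^ 2 - 1)).card := Finset.card_le_card hsub
      _ = 4 * k ^ 2 - 1 := by rw [Nat.card_Icc]; omega
  have h2 : (B.filter (fun x => ¬ P x)).card ≤ k + 1 := by
    set Bb := B.filter (fun x => ¬ P x) with hBb
    rcases Finset.eq_empty_or_nonempty Bb with he | hne
    · rw [he]; simp
    · set t := Bb.max' hne with ht
      have htB : t ∈ Bb := Finset.max'_mem _ _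
      have htBB : t ∈ B := (Finset.mem_filter.1 htB).1
      have hbig : ∀ x ∈ Bb, 4 * k ^ 2 ≤ x := by
        intro x hx
        have := (Finset.mem_filter.1 hx).2
        omega
      have htM : t ≤ f k (4 * k ^ 2) - 1 := (hB t htBB).2
      -- on Bb.erase t, the map b ↦ dd k b t is strictly antitone
      have hanti : ∀ b ∈ Bb.erase t, ∀ b' ∈ Bb.erase t, b < b' →
          dd k b' t < dd k b t := by
        intro b hb b' hb' hbb'
        have hbBb : b ∈ Bb := Finset.mem_of_mem_erase hb
        have hb'Bb : b' ∈ Bb := Finset.mem_of_mem_erase hb'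
        have hbB : b ∈ B := (Finset.mem_filter.1 hbBb).1
        have hb'B : b' ∈ B := (Finset.mem_filter.1 hb'Bb).1
        have hb't : b' < t :=
          lt_of_le_of_ne (Finset.le_max' _ _ hb'Bb) (Finset.ne_of_mem_erase hb')
        have hbt : b < t := hbb'.trans hb't
        have hb4 : 4 * k ^ 2 ≤ b := hbig b hbBb
        have hb'4 : 4 * k ^ 2 ≤ b' := hbig b' hb'Bb
        have hb'M : b' ≤ f k (4 * k ^ 2) - 1 := by omega
        have hb1 : 1 ≤ b := by nlinarith
        -- min-homogeneity: col k b b' = col k b t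
        have hcols : col k b b' = col k b t := hmh b b' t hbB hb'B htBB hbb' hbt
        have hdlt1 : dd k b b' < k := dd_lt hk hb4 hbb' hb'M
        have hdlt2 : dd k b t < k := dd_lt hk hb4 hbt htM
        obtain ⟨hdeq, hleq⟩ := col_decode_dd (by omega) hdlt1 hdlt2 hcols
        set d0 := dd k b t with hd0
        set l0 := ll k b t with hl0
        have hd0pos : 1 ≤ d0 := dd_pos (by omega) hbt
        -- (f d0)^[l0] b ≤ b'
        have hx : (f d0)^[l0] b ≤ b' := by
          have := ll_spec (k := k) (m := b) (n := b') (by omega) hb1 hbb'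
          rwa [hleq, hdeq] at this
        -- t < (f d0)^[l0 + 1] b
        have hty : t < (f d0)^[l0 + 1] b := ll_succ_gt hk hb4 hbt htM
        have htfb' : t < f d0 b' := by
          have : (f d0)^[l0 + 1] b = f d0 ((f d0)^[l0] b) := Function.iterate_succ_apply' _ _ _
          rw [this] at hty
          exact hty.trans_le (f_mono d0 hx)
        -- conclude dd k b' t < d0
        by_contra hcon
        push_neg at hcon
        have hspec : f (dd k b' t) b' ≤ t := dd_spec (by omega) hb't
        have : f d0 b' ≤ f (dd k b' t) b' :=
          f_mono_idx hd0pos hcon (four_le_m hk hb'4)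
        omega
      have hinj : Set.InjOn (fun b => dd k b t) (Bb.erase t) := by
        intro x hx y hy hxy
        have hxy2 : dd k x t = dd k y t := hxy
        rcases lt_trichotomy x y with h | h | h
        · exact absurd hxy2 (hanti x hx y hy h).ne'
        · exact h
        · exact absurd hxy2 (hanti y hy x hx h).ne
      have hmaps : ∀ b ∈ Bb.erase t, dd k b t ∈ Finset.Icc 1 (k - 1) := by
        intro b hb
        have hbBb : b ∈ Bb := Finset.mem_of_mem_erase hb
        have hbt : b < t :=
          lt_of_le_of_ne (Finset.le_max' _ _ hbBb) (Finset.ne_of_mem_erase hb)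
        have hb4 : 4 * k ^ 2 ≤ b := hbig b hbBb
        rw [Finset.mem_Icc]
        exact ⟨dd_pos (by omega) hbt, by have := dd_lt hk hb4 hbt htM; omega⟩
      have hcard' : (Bb.erase t).card ≤ k - 1 := by
        calc (Bb.erase t).card ≤ (Finset.Icc 1 (k - 1)).card :=
          Finset.card_le_card_of_injOn _ hmaps hinj
        _ = k - 1 := by rw [Nat.card_Icc]; omega
      have : Bb.card ≤ (Bb.erase t).card + 1 := by
        rw [Finset.card_erase_of_mem htB]
        omega
      omega
  have h4 : 1 ≤ 4 * k ^ 2 := by nlinarith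
  rw [hsplit]
  omega

end KS

namespace KS

lemma exists_infinite_minhomog (c : ℕ → ℕ → ℕ)
    (hreg : ∀ m n, 1 ≤ m → m < n → c m n < m) :
    ∃ a : ℕ → ℕ, StrictMono a ∧ (∀ i, 1 ≤ a i) ∧
      ∀ i j j', i < j → i < j' → c (a i) (a j) = c (a i) (a j') := by
  classical
  have step : ∀ X : Set ℕ, ∃ Y : Set ℕ,
      (X.Infinite ∧ ∀ x ∈ X, 1 ≤ x) →
      (Y ⊆ X ∧ Y.Infinite ∧ (∀ y ∈ Y, sInf X < y ∧ 1 ≤ y) ∧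
        ∀ y ∈ Y, ∀ y' ∈ Y, c (sInf X) y = c (sInf X) y') := by
    intro X
    by_cases hX : X.Infinite ∧ ∀ x ∈ X, 1 ≤ x
    case neg => exact ⟨∅, fun h => absurd h hX⟩
    obtain ⟨hXinf, hX1⟩ := hX
    set m := sInf X with hm
    have hmX : m ∈ X := Nat.sInf_mem hXinf.nonempty
    have hm1 : 1 ≤ m := hX1 m hmX
    set X' : Set ℕ := {x ∈ X | m < x} with hX'
    have hX'inf : X'.Infinite := by
      have hss : X \ {x | x ≤ m} ⊆ X' := by
        intro x hx
        exact ⟨hx.1, by simpa using hx.2⟩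
      exact (hXinf.diff (Set.finite_le_nat m)).mono hss
    have hv : ∃ v, {x ∈ X' | c m x = v}.Infinite := by
      by_contra hcon
      push_neg at hcon
      have hsub : X' ⊆ ⋃ v ∈ Finset.range m, {x ∈ X' | c m x = v} := by
        intro x hx
        have hcx : c m x < m := hreg m x hm1 hx.2
        simp only [Set.mem_iUnion]
        exact ⟨c m x, by simpa using hcx, hx, rfl⟩
      have hfin : X'.Finite := Set.Finite.subset
        (Set.Finite.biUnion (Finset.range m).finite_toSet
          (fun v _ => hcon v)) hsub
      exact hX'inf hfin
    obtain ⟨v, hvinf⟩ := hv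
    refine ⟨{x ∈ X' | c m x = v}, fun _ => ?_⟩
    refine ⟨fun y hy => hy.1.1, hvinf, fun y hy => ⟨hy.1.2, hX1 y hy.1.1⟩, ?_⟩
    intro y hy y' hy'
    rw [hy.2, hy'.2]
  choose g hg using step
  set Z : ℕ → Set ℕ := fun i => Nat.rec (Set.Ici 1) (fun _ X => g X) i with hZdef
  have hZs : ∀ i, Z (i + 1) = g (Z i) := fun i => rfl
  have hinv : ∀ i, (Z i).Infinite ∧ ∀ x ∈ Z i, 1 ≤ x := by
    intro i
    induction i with
    | zero => exact ⟨Set.Ici_infinite 1, fun x hx => hx⟩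
    | succ i ih =>
        have h := hg (Z i) ih
        rw [hZs]
        exact ⟨h.2.1, fun x hx => (h.2.2.1 x hx).2⟩
  set a : ℕ → ℕ := fun i => sInf (Z i) with ha
  have haZ : ∀ i, a i ∈ Z i := fun i => Nat.sInf_mem (hinv i).1.nonempty
  have hstepa : ∀ i, ∀ y ∈ Z (i + 1), a i < y := by
    intro i y hy
    rw [hZs] at hy
    exact ((hg (Z i) (hinv i)).2.2.1 y hy).1
  have hsub : ∀ i j, i ≤ j → Z j ⊆ Z i := by
    intro i j hij
    induction j, hij using Nat.le_induction with
    | base => exact fun _ h => h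
    | succ j hj ih =>
        intro x hx
        rw [hZs] at hx
        exact ih ((hg (Z j) (hinv j)).1 hx)
  have hlt : ∀ i j, i < j → a i < a j := fun i j hij =>
    hstepa i (a j) (hsub (i + 1) j hij (haZ j))
  refine ⟨a, fun i j hij => hlt i j hij, fun i => (hinv i).2 (a i) (haZ i), ?_⟩
  intro i j j' hij hij'
  have h := hg (Z i) (hinv i)
  have h1 : a j ∈ g (Z i) := by rw [← hZs]; exact hsub (i + 1) j hij (haZ j)
  have h2 : a j' ∈ g (Z i) := by rw [← hZs]; exact hsub (i + 1) j' hij' (haZ j')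
  exact h.2.2.2 (a j) h1 (a j') h2

end KS

namespace KS

lemma S_nonempty (s : ℕ) :
    {N : ℕ | ∀ c : ℕ → ℕ → ℕ,
      (∀ m n, m ∈ Finset.Icc 1 N → n ∈ Finset.Icc 1 N → m < n → c m n < m) →
      ∃ B : Finset ℕ, B ⊆ Finset.Icc 1 N ∧ B.card = s ∧
        ∀ m n n', m ∈ B → n ∈ B → n' ∈ B → m < n → m < n' → c m n = c m n'}.Nonempty := by
  classical
  by_contra hS
  rw [Set.not_nonempty_iff_eq_empty] at hS
  have hall : ∀ N : ℕ, ∃ c : ℕ → ℕ → ℕ,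
      (∀ m n, m ∈ Finset.Icc 1 N → n ∈ Finset.Icc 1 N → m < n → c m n < m) ∧
      ∀ B : Finset ℕ, B ⊆ Finset.Icc 1 N → B.card = s →
        ¬ ∀ m n n', m ∈ B → n ∈ B → n' ∈ B → m < n → m < n' → c m n = c m n' := by
    intro N
    have hN : N ∉ ({N : ℕ | ∀ c : ℕ → ℕ → ℕ,
        (∀ m n, m ∈ Finset.Icc 1 N → n ∈ Finset.Icc 1 N → m < n → c m n < m) →
        ∃ B : Finset ℕ, B ⊆ Finset.Icc 1 N ∧ B.card = s ∧
          ∀ m n n', m ∈ B → n ∈ B → n' ∈ B → m < n → m < n' → c m n = c m n'} : Set ℕ) := by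
      rw [hS]; exact Set.notMem_empty N
    rw [Set.mem_setOf_eq] at hN
    push_neg at hN
    obtain ⟨c, hc1, hc2⟩ := hN
    refine ⟨c, hc1, fun B hB hcard hmh => ?_⟩
    obtain ⟨m, n, n', h1, h2, h3, h4, h5, h6⟩ := hc2 B hB hcard
    exact h6 (hmh m n n' h1 h2 h3 h4 h5)
  choose cN hreg hbad using hall
  set U : Ultrafilter ℕ := Filter.hyperfilter ℕ with hUdef
  have hcof : ∀ t : ℕ, {N : ℕ | t ≤ N} ∈ U := by
    intro t
    apply Filter.hyperfilter_le_cofinite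
    rw [Filter.mem_cofinite]
    apply Set.Finite.subset (Set.finite_lt_nat t)
    intro x hx
    simpa using hx
  have key : ∀ m n : ℕ, 1 ≤ m → m < n → ∃ v, v < m ∧ {N : ℕ | cN N m n = v} ∈ U := by
    intro m n hm1 hmn
    by_contra hcon
    push_neg at hcon
    have hmemc : ∀ v ∈ Finset.range m, {N : ℕ | cN N m n = v}ᶜ ∈ U := by
      intro v hv
      rw [Ultrafilter.compl_mem_iff_notMem]
      exact hcon v (Finset.mem_range.1 hv)
    have hT : ({N : ℕ | n ≤ N} ∩ ⋂ v ∈ Finset.range m, {N : ℕ | cN N m n = v}ᶜ) ∈ U :=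
      Filter.inter_mem (hcof n) ((Filter.biInter_finset_mem _).2 hmemc)
    obtain ⟨N, hN1, hN2⟩ := Filter.nonempty_of_mem hT
    have hnN : n ≤ N := hN1
    have hcc : cN N m n < m := hreg N m n
      (by rw [Finset.mem_Icc]; omega)
      (by rw [Finset.mem_Icc]; omega) hmn
    rw [Set.mem_iInter₂] at hN2
    exact hN2 (cN N m n) (Finset.mem_range.2 hcc) rfl
  have keyfn : ∀ m n : ℕ, ∃ v, 1 ≤ m → m < n → v < m ∧ {N : ℕ | cN N m n = v} ∈ U := by
    intro m n
    by_cases h : 1 ≤ m ∧ m < n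
    · obtain ⟨v, hv⟩ := key m n h.1 h.2
      exact ⟨v, fun _ _ => hv⟩
    · exact ⟨0, fun h1 h2 => absurd ⟨h1, h2⟩ h⟩
  choose cc hcc using keyfn
  have hreg' : ∀ m n, 1 ≤ m → m < n → cc m n < m := fun m n h1 h2 => (hcc m n h1 h2).1
  obtain ⟨a, hmono, h1a, hmh⟩ := exists_infinite_minhomog cc hreg'
  set B : Finset ℕ := (Finset.range s).image a with hBdef
  have hcard : B.card = s := by
    rw [hBdef, Finset.card_image_of_injective _ hmono.injective, Finset.card_range]
  have hGU : ({N : ℕ | a s ≤ N} ∩ ⋂ p ∈ (B ×ˢ B).filter (fun p : ℕ × ℕ => p.1 < p.2),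
      {N : ℕ | cN N p.1 p.2 = cc p.1 p.2}) ∈ U := by
    refine Filter.inter_mem (hcof _) ((Filter.biInter_finset_mem _).2 ?_)
    intro p hp
    rw [Finset.mem_filter, Finset.mem_product] at hp
    obtain ⟨⟨hp1, _⟩, hplt⟩ := hp
    obtain ⟨i, _, hip⟩ := Finset.mem_image.1 hp1
    have h1p : 1 ≤ p.1 := by rw [← hip]; exact h1a i
    exact (hcc p.1 p.2 h1p hplt).2
  obtain ⟨N, hNa, hNpairs⟩ := Filter.nonempty_of_mem hGU
  rw [Set.mem_iInter₂] at hNpairs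
  have hBsub : B ⊆ Finset.Icc 1 N := by
    intro x hx
    obtain ⟨i, hi, hix⟩ := Finset.mem_image.1 hx
    rw [Finset.mem_range] at hi
    rw [Finset.mem_Icc, ← hix]
    exact ⟨h1a i, (le_of_lt (hmono hi)).trans hNa⟩
  refine hbad N B hBsub hcard ?_
  intro m n n' hm hn hn' hmn hmn'
  have hpair : ∀ x y, x ∈ B → y ∈ B → x < y → cN N x y = cc x y := by
    intro x y hx hy hxy
    exact hNpairs (x, y) (Finset.mem_filter.2 ⟨Finset.mem_product.2 ⟨hx, hy⟩, hxy⟩)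
  rw [hpair m n hm hn hmn, hpair m n' hm hn' hmn']
  obtain ⟨i, _, him⟩ := Finset.mem_image.1 hm
  obtain ⟨j, _, hjn⟩ := Finset.mem_image.1 hn
  obtain ⟨j', _, hjn'⟩ := Finset.mem_image.1 hn'
  rw [← him, ← hjn, ← hjn']
  apply hmh i j j'
  · exact hmono.lt_iff_lt.1 (by rw [him, hjn]; exact hmn)
  · exact hmono.lt_iff_lt.1 (by rw [him, hjn']; exact hmn')

end KS

theorem nu_lower_bound (k : ℕ) (hk : 2 < k) :
    f k (4 * k ^ 2) - 1 < nu (4 * k ^ 2 + k + 1) := by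
  classical
  by_contra hle
  push_neg at hle
  have hne := KS.S_nonempty (4 * k ^ 2 + k + 1)
  have hmem := Nat.sInf_mem hne
  have hN0M : sInf {N : ℕ | ∀ c : ℕ → ℕ → ℕ,
      (∀ m n, m ∈ Finset.Icc 1 N → n ∈ Finset.Icc 1 N → m < n → c m n < m) →
      ∃ B : Finset ℕ, B ⊆ Finset.Icc 1 N ∧ B.card = 4 * k ^ 2 + k + 1 ∧
        ∀ m n n', m ∈ B → n ∈ B → n' ∈ B → m < n → m < n' → c m n = c m n'}
      ≤ f k (4 * k ^ 2) - 1 := hle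
  have hregr : ∀ m n, m ∈ Finset.Icc 1 (sInf {N : ℕ | ∀ c : ℕ → ℕ → ℕ,
      (∀ m n, m ∈ Finset.Icc 1 N → n ∈ Finset.Icc 1 N → m < n → c m n < m) →
      ∃ B : Finset ℕ, B ⊆ Finset.Icc 1 N ∧ B.card = 4 * k ^ 2 + k + 1 ∧
        ∀ m n n', m ∈ B → n ∈ B → n' ∈ B → m < n → m < n' → c m n = c m n'}) →
      n ∈ Finset.Icc 1 (sInf {N : ℕ | ∀ c : ℕ → ℕ → ℕ,
      (∀ m n, m ∈ Finset.Icc 1 N → n ∈ Finset.Icc 1 N → m < n → c m n < m) →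
      ∃ B : Finset ℕ, B ⊆ Finset.Icc 1 N ∧ B.card = 4 * k ^ 2 + k + 1 ∧
        ∀ m n n', m ∈ B → n ∈ B → n' ∈ B → m < n → m < n' → c m n = c m n'}) →
      m < n → KS.col k m n < m := by
    intro m n hmI hnI hmn
    rw [Finset.mem_Icc] at hmI hnI
    exact KS.col_lt hk hmI.1 hmn (hnI.2.trans hN0M)
  obtain ⟨B, hBsub, hBcard, hBmh⟩ := hmem (KS.col k) hregr
  have hB : ∀ x ∈ B, 1 ≤ x ∧ x ≤ f k (4 * k ^ 2) - 1 := by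
    intro x hx
    have hxI := hBsub hx
    rw [Finset.mem_Icc] at hxI
    exact ⟨hxI.1, hxI.2.trans hN0M⟩
  have hcb : B.card ≤ 4 * k ^ 2 + k := KS.card_bound hk B hB hBmh
  rw [hBcard] at hcb
  exact Nat.not_succ_le_self _ hcb
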